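/- A subset α ⊆ ℕ* satisfying (i) α is inhabited and (ii) any two elements of α are comparable under the initial-segment order, is a formal point of formal Baire space (i.e., additionally downward closed under initial segments and every element has a one-step extension in α) if and only if for every a ∈ ℕ* and U ⊆ ℕ*, a ◁ U and a ∈ α imply there exists b ∈ U with b ∈ α, where ◁ is the inductively defined cover of formal Baire space. -/
import Mathlib


/-- Initial segment of `α` of length `n`. -/
def seg (α : ℕ → ℕ) (n : ℕ) : List ℕ := List.ofFn (fun i : Fin n => α i)

/-- `a` followed by the constant zero sequence. -/
def zext (a : List ℕ) : ℕ → ℕ := fun i => a.getD i 0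

/-- Upward closure under extension. -/
def extU (U : Set (List ℕ)) : Set (List ℕ) := {a | ∃ b ∈ U, b <+: a}

/-- The cover of formal Baire space, generated by η, ζ, ϝ. -/
inductive Cover : List ℕ → Set (List ℕ) → Prop
  | eta {a : List ℕ} {U : Set (List ℕ)} : a ∈ U → Cover a U
  | zeta {a : List ℕ} {U : Set (List ℕ)} (k : ℕ) : Cover a U → Cover (a ++ [k]) U
  | digamma {a : List ℕ} {U : Set (List ℕ)} : (∀ n, Cover (a ++ [n]) U) → Cover a U

/-- A spread: a decidable tree where every node has a child. -/
def IsSpread (T : Set (List ℕ)) : Prop :=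
  (∀ a, a ∈ T ∨ a ∉ T) ∧ (∀ a b : List ℕ, a <+: b → b ∈ T → a ∈ T) ∧
  (∀ a ∈ T, ∃ n, a ++ [n] ∈ T)

/-- A fan: a finitely branching spread. -/
def IsFan (T : Set (List ℕ)) : Prop :=
  IsSpread T ∧ ∀ a ∈ T, ∃ N, ∀ n, a ++ [n] ∈ T → n ≤ N

/-- `α` is a path in the tree `T`. -/
def IsPath (T : Set (List ℕ)) (α : ℕ → ℕ) : Prop := ∀ n, seg α n ∈ T

/-- A c-bar: a c-set barring every sequence. -/
def IsCBar (P : Set (List ℕ)) : Prop :=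
  (∃ δ : List ℕ → ℕ, ∀ a, a ∈ P ↔ ∀ b, δ a = δ (a ++ b)) ∧
  (∀ α : ℕ → ℕ, ∃ n, seg α n ∈ P)

/-- Pointwise continuity for `F : ℕ^ℕ → ℕ`. -/
def PtwiseCts (F : (ℕ → ℕ) → ℕ) : Prop :=
  ∀ α : ℕ → ℕ, ∃ n, ∀ β : ℕ → ℕ, seg β n = seg α n → F β = F α

/-- An inductive subset of ℕ*. -/
def Inductive (Q : Set (List ℕ)) : Prop := ∀ a, (∀ n, a ++ [n] ∈ Q) → a ∈ Q

/-- Preimage of a subset of ℕ under a relation r ⊆ ℕ* × ℕ. -/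
def rInv (r : List ℕ → ℕ → Prop) (D : Set ℕ) : Set (List ℕ) := {a | ∃ n ∈ D, r a n}

/-- Formal topology map from formal Baire space to formal natural numbers. -/
def IsFTopMap (r : List ℕ → ℕ → Prop) : Prop :=
  Cover [] (rInv r Set.univ) ∧
  ∀ n m : ℕ, ∀ a ∈ extU (rInv r {n}) ∩ extU (rInv r {m}),
    Cover a (rInv r {l | l = n ∧ n = m})

/-- `F` is formally continuous: induced by a formal topology map on points. -/
def FormallyCts (F : (ℕ → ℕ) → ℕ) : Prop :=
  ∃ r : List ℕ → ℕ → Prop, IsFTopMap r ∧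
    ∀ α : ℕ → ℕ, {n | ∃ k, r (seg α k) n} = {F α}

/-- The class of Brouwer-operations. -/
inductive IsBrouwerOp : (List ℕ → ℕ) → Prop
  | const (n : ℕ) : IsBrouwerOp (fun _ => n + 1)
  | sup {γ : List ℕ → ℕ} : γ [] = 0 →
      (∀ n, IsBrouwerOp (fun a => γ (n :: a))) → IsBrouwerOp γ

/-- `bar γ`: minimal sequences on which `γ` is positive. -/
def barOf (γ : List ℕ → ℕ) : Set (List ℕ) :=
  {a | 0 < γ a ∧ ∀ b : List ℕ, b <+: a → b ≠ a → γ b = 0}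

/-- The set presentation `Cov` of formal Baire space. -/
inductive Cov : List ℕ → Set (List ℕ) → Prop
  | single (a : List ℕ) : Cov a {a}
  | union {a : List ℕ} {U : ℕ → Set (List ℕ)} :
      (∀ n, Cov (a ++ [n]) (U n)) → Cov a (⋃ n, U n)

theorem cover_append_aux (a : List ℕ) : ∀ c : List ℕ, Cover (a ++ c) {a} := by
  intro c
  induction c using List.reverseRecOn with
  | nil => rw [List.append_nil]; exact Cover.eta rfl
  | append_singleton c k ih =>
    rw [← List.append_assoc]
    exact Cover.zeta k ih

theorem formal_point_iff_splits (α : Set (List ℕ))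
    (h1 : ∃ a, a ∈ α)
    (h2 : ∀ a ∈ α, ∀ b ∈ α, a <+: b ∨ b <+: a) :
    ((∀ a b : List ℕ, a <+: b → b ∈ α → a ∈ α) ∧ (∀ a ∈ α, ∃ n, a ++ [n] ∈ α))
      ↔ (∀ (a : List ℕ) (U : Set (List ℕ)), Cover a U → a ∈ α → ∃ b ∈ U, b ∈ α) := by
  constructor
  · rintro ⟨hdc, hext⟩ a U hc
    induction hc with
    | eta h => exact fun ha => ⟨_, h, ha⟩
    | zeta k hc ih => exact fun ha => ih (hdc _ _ ⟨[k], rfl⟩ ha)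
    | digamma h ih =>
      intro ha
      obtain ⟨n, hn⟩ := hext _ ha
      exact ih n hn
  · intro hs
    constructor
    · intro a b hab hb
      obtain ⟨c, rfl⟩ := hab
      obtain ⟨b', hb', hb'α⟩ := hs _ _ (cover_append_aux a c) hb
      exact hb' ▸ hb'α
    · intro a ha
      have hc : Cover a {b | ∃ n, b = a ++ [n]} :=
        Cover.digamma (fun n => Cover.eta ⟨n, rfl⟩)
      obtain ⟨b, ⟨n, rfl⟩, hbα⟩ := hs _ _ hc ha
      exact ⟨n, hbα⟩
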